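/- Let U be a positive integer, let A = D + E with D an invertible U×U complex diagonal matrix and E a U×U complex matrix satisfying ‖D⁻¹E‖_F < 1, let K ≥ 0 be an integer, and let Δ_K = A⁻¹ − Σ_{n=0}^{K−1}(−D⁻¹E)ⁿD⁻¹. Then for every vector y ∈ ℂ^U, ‖Δ_K y‖₂ ≤ ‖D⁻¹E‖_F^K · ‖A⁻¹ y‖₂. In particular, the residual estimation error ‖Δ_K y‖₂ tends to zero exponentially fast as K → ∞. -/

import Mathlib

open Matrix Filter

/-- Frobenius norm of a complex matrix. -/
noncomputable def frobNorm {m n : Type*} [Fintype m] [Fintype n] (M : Matrix m n ℂ) : ℝ :=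
  Real.sqrt (∑ i, ∑ j, ‖M i j‖ ^ 2)

/-- Euclidean (ℓ₂) norm of a complex vector. -/
noncomputable def l2Norm {n : Type*} [Fintype n] (v : n → ℂ) : ℝ :=
  Real.sqrt (∑ i, ‖v i‖ ^ 2)

section Aux

attribute [local instance] Matrix.frobeniusSeminormedAddCommGroup
  Matrix.frobeniusNormedAddCommGroup Matrix.frobeniusNormedRing Matrix.frobeniusNormedSpace

lemma frobNorm_eq {m n : Type*} [Fintype m] [Fintype n] (M : Matrix m n ℂ) :
    frobNorm M = ‖M‖ := by
  rw [Matrix.frobenius_norm_def, frobNorm, Real.sqrt_eq_rpow]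
  congr 1
  refine Finset.sum_congr rfl fun i _ => Finset.sum_congr rfl fun j _ => ?_
  rw [← Real.rpow_natCast ‖M i j‖ 2]
  norm_num

lemma frobNorm_nonneg {m n : Type*} [Fintype m] [Fintype n] (M : Matrix m n ℂ) :
    0 ≤ frobNorm M := Real.sqrt_nonneg _

lemma l2Norm_nonneg {n : Type*} [Fintype n] (v : n → ℂ) : 0 ≤ l2Norm v := Real.sqrt_nonneg _

lemma l2Norm_eq_frobNorm_col {n : Type*} [Fintype n] (v : n → ℂ) :
    l2Norm v = frobNorm (Matrix.replicateCol Unit v) := by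
  simp [l2Norm, frobNorm, Matrix.replicateCol_apply]

lemma l2Norm_mulVec_le {m n : Type*} [Fintype m] [Fintype n] (M : Matrix m n ℂ) (v : n → ℂ) :
    l2Norm (M.mulVec v) ≤ frobNorm M * l2Norm v := by
  rw [l2Norm_eq_frobNorm_col, l2Norm_eq_frobNorm_col, Matrix.replicateCol_mulVec,
    frobNorm_eq, frobNorm_eq, frobNorm_eq]
  exact Matrix.frobenius_norm_mul M (Matrix.replicateCol Unit v)

lemma l2Norm_pow_mulVec_le {n : Type*} [Fintype n] [DecidableEq n]
    (B : Matrix n n ℂ) (K : ℕ) (w : n → ℂ) :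
    l2Norm ((B ^ K).mulVec w) ≤ frobNorm B ^ K * l2Norm w := by
  induction K with
  | zero => simp [Matrix.one_mulVec]
  | succ K ih =>
    rw [pow_succ']
    calc l2Norm ((B * B ^ K).mulVec w) = l2Norm (B.mulVec ((B ^ K).mulVec w)) := by
          rw [Matrix.mulVec_mulVec]
      _ ≤ frobNorm B * l2Norm ((B ^ K).mulVec w) := l2Norm_mulVec_le _ _
      _ ≤ frobNorm B * (frobNorm B ^ K * l2Norm w) := by
          exact mul_le_mul_of_nonneg_left ih (frobNorm_nonneg _)
      _ = frobNorm B ^ (K + 1) * l2Norm w := by ring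

lemma key_identity {U : ℕ} (d : Fin U → ℂ) (hd : ∀ i, d i ≠ 0)
    (E : Matrix (Fin U) (Fin U) ℂ)
    (h : frobNorm ((Matrix.diagonal d)⁻¹ * E) < 1) (K : ℕ) :
    (Matrix.diagonal d + E)⁻¹ -
      ∑ n ∈ Finset.range K, (-((Matrix.diagonal d)⁻¹ * E)) ^ n * (Matrix.diagonal d)⁻¹ =
    (-((Matrix.diagonal d)⁻¹ * E)) ^ K * (Matrix.diagonal d + E)⁻¹ := by
  set D := Matrix.diagonal d with hD
  set B := -(D⁻¹ * E) with hBdef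
  haveI : CompleteSpace (Matrix (Fin U) (Fin U) ℂ) := FiniteDimensional.complete ℂ _
  have hBnorm : ‖B‖ < 1 := by
    rw [← frobNorm_eq]
    simpa [frobNorm, hBdef, Matrix.neg_apply] using h
  have hdet : IsUnit D.det := by
    rw [hD, Matrix.det_diagonal]
    exact isUnit_iff_ne_zero.mpr (Finset.prod_ne_zero_iff.mpr fun i _ => hd i)
  have hDD : D * D⁻¹ = 1 := Matrix.mul_nonsing_inv _ hdet
  have hunit : IsUnit (1 - B) := (Units.oneSub B hBnorm).isUnit
  have h1det : IsUnit (1 - B).det := (Matrix.isUnit_iff_isUnit_det _).mp hunit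
  have hSinv : (1 - B) * (1 - B)⁻¹ = 1 := Matrix.mul_nonsing_inv _ h1det
  have hA : D + E = D * (1 - B) := by
    rw [hBdef, sub_neg_eq_add, mul_add, mul_one, ← Matrix.mul_assoc, hDD, Matrix.one_mul]
  have hAinv : (D + E)⁻¹ = (1 - B)⁻¹ * D⁻¹ := by
    rw [hA, Matrix.mul_inv_rev]
  have hSum : (∑ n ∈ Finset.range K, B ^ n) = (1 - B ^ K) * (1 - B)⁻¹ := by
    calc (∑ n ∈ Finset.range K, B ^ n)
        = (∑ n ∈ Finset.range K, B ^ n) * ((1 - B) * (1 - B)⁻¹) := by rw [hSinv, mul_one]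
      _ = ((∑ n ∈ Finset.range K, B ^ n) * (1 - B)) * (1 - B)⁻¹ := by rw [mul_assoc]
      _ = (1 - B ^ K) * (1 - B)⁻¹ := by rw [geom_sum_mul_neg]
  rw [hAinv, ← Finset.sum_mul, hSum, sub_mul 1 (B ^ K), one_mul, sub_mul,
    sub_sub_cancel, Matrix.mul_assoc]

end Aux

/-- Let `A = D + E` with `D = diagonal d` invertible and `‖D⁻¹E‖_F < 1`,
and let `Δ_K = A⁻¹ - Σ_{n=0}^{K-1} (-D⁻¹E)ⁿ D⁻¹`. Then for every `y ∈ ℂ^U`,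
`‖Δ_K y‖₂ ≤ ‖D⁻¹E‖_F^K ‖A⁻¹ y‖₂`; in particular `‖Δ_K y‖₂ → 0` as `K → ∞`. -/
theorem residual_estimation_error_bound {U : ℕ} (hU : 0 < U)
    (d : Fin U → ℂ) (hd : ∀ i, d i ≠ 0) (E : Matrix (Fin U) (Fin U) ℂ)
    (h : frobNorm ((Matrix.diagonal d)⁻¹ * E) < 1) :
    (∀ (K : ℕ) (y : Fin U → ℂ),
        l2Norm
          (((Matrix.diagonal d + E)⁻¹ -
              ∑ n ∈ Finset.range K,
                (-((Matrix.diagonal d)⁻¹ * E)) ^ n * (Matrix.diagonal d)⁻¹).mulVec y) ≤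
          frobNorm ((Matrix.diagonal d)⁻¹ * E) ^ K *
            l2Norm ((Matrix.diagonal d + E)⁻¹.mulVec y)) ∧
    ∀ y : Fin U → ℂ,
      Tendsto
        (fun K : ℕ =>
          l2Norm
            (((Matrix.diagonal d + E)⁻¹ -
                ∑ n ∈ Finset.range K,
                  (-((Matrix.diagonal d)⁻¹ * E)) ^ n * (Matrix.diagonal d)⁻¹).mulVec y))
        atTop (nhds 0) := by
  have hfB : frobNorm (-((Matrix.diagonal d)⁻¹ * E)) = frobNorm ((Matrix.diagonal d)⁻¹ * E) := by
    simp [frobNorm]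
  have hbound : ∀ (K : ℕ) (y : Fin U → ℂ),
      l2Norm
        (((Matrix.diagonal d + E)⁻¹ -
            ∑ n ∈ Finset.range K,
              (-((Matrix.diagonal d)⁻¹ * E)) ^ n * (Matrix.diagonal d)⁻¹).mulVec y) ≤
        frobNorm ((Matrix.diagonal d)⁻¹ * E) ^ K *
          l2Norm ((Matrix.diagonal d + E)⁻¹.mulVec y) := by
    intro K y
    rw [key_identity d hd E h K, ← Matrix.mulVec_mulVec, ← hfB]
    exact l2Norm_pow_mulVec_le _ K _
  refine ⟨hbound, fun y => ?_⟩
  have h0 : (0:ℝ) ≤ frobNorm ((Matrix.diagonal d)⁻¹ * E) := frobNorm_nonneg _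
  have htend : Tendsto (fun K : ℕ => frobNorm ((Matrix.diagonal d)⁻¹ * E) ^ K *
      l2Norm ((Matrix.diagonal d + E)⁻¹.mulVec y)) atTop (nhds 0) := by
    simpa using (tendsto_pow_atTop_nhds_zero_of_lt_one h0 h).mul_const
      (l2Norm ((Matrix.diagonal d + E)⁻¹.mulVec y))
  exact squeeze_zero (fun K => l2Norm_nonneg _) (fun K => hbound K y) htend
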